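/- A normalized k-upper run cannot introduce excluded data values into the topmost k-stack: if R is a normalized k-upper run (every non-ε push transition of R reads the distinguished data value 0), d ∈ D \ {0} is not read by R and does not appear in the topmost k-stack s^k of R's initial configuration, then d does not appear in the topmost k-stack t^k of R's final configuration. -/

import Mathlib

namespace HOPDA

/-- A `k`-stack with data: a 0-stack is a symbol from `Γ` together with an optional
data value from `D` (`none` = no-data); a `(k+1)`-stack is a list of `k`-stacks
(top of the stack is the last element of the list). -/
def Stk (Γ D : Type) : ℕ → Type
  | 0 => Γ × Option D
  | k+1 => List (Stk Γ D k)

variable {Γ D : Type}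

def Stk.toList {k : ℕ} (s : Stk Γ D (k+1)) : List (Stk Γ D k) := s
def Stk.ofList {k : ℕ} (l : List (Stk Γ D k)) : Stk Γ D (k+1) := l
def Stk.toAtom (s : Stk Γ D 0) : Γ × Option D := s
def Stk.ofAtom (x : Γ × Option D) : Stk Γ D 0 := x

/-- Stack operations: `pop k` and `push k α`. -/
inductive Op (Γ : Type) where
  | pop : ℕ → Op Γ
  | push : ℕ → Γ → Op Γ

def Op.level {Γ : Type} : Op Γ → ℕ
  | .pop k => k
  | .push k _ => k

/-- `pop^k`: remove the topmost `(k-1)`-stack of the topmost `k`-stack;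
it may only be executed when the topmost `k`-stack has size at least 2. -/
def popAt (k : ℕ) : (n : ℕ) → Stk Γ D n → Option (Stk Γ D n)
  | 0, _ => none
  | n+1, s =>
    if k = n + 1 then
      if 2 ≤ s.toList.length then some (Stk.ofList s.toList.dropLast) else none
    else
      match s.toList.getLast? with
      | none => none
      | some t => (popAt k n t).map (fun t' => Stk.ofList (s.toList.dropLast.concat t'))

/-- Replace the topmost 0-stack by `x`. -/
def setTop0 (x : Γ × Option D) : (n : ℕ) → Stk Γ D n → Option (Stk Γ D n)
  | 0, _ => some (Stk.ofAtom x)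
  | n+1, s =>
    match s.toList.getLast? with
    | none => none
    | some t => (setTop0 x n t).map (fun t' => Stk.ofList (s.toList.dropLast.concat t'))

/-- `push^k_α` with data `d`: duplicate the topmost `(k-1)`-stack, and replace the
topmost 0-stack of the copy by `(α, d)`. -/
def pushAt (k : ℕ) (α : Γ) (d : Option D) : (n : ℕ) → Stk Γ D n → Option (Stk Γ D n)
  | 0, _ => none
  | n+1, s =>
    if k = n + 1 then
      match s.toList.getLast? with
      | none => none
      | some t => (setTop0 (α, d) n t).map (fun t' => Stk.ofList (s.toList.concat t'))
    else
      match s.toList.getLast? with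
      | none => none
      | some t => (pushAt k α d n t).map (fun t' => Stk.ofList (s.toList.dropLast.concat t'))

/-- The topmost 0-stack of a stack. -/
def top0 : (n : ℕ) → Stk Γ D n → Option (Γ × Option D)
  | 0, s => some s.toAtom
  | n+1, s => s.toList.getLast?.bind (top0 n)

/-- Apply an operation (with read data value `d`, `none` for ε) to an `n`-stack. -/
def applyOp (op : Op Γ) (d : Option D) (n : ℕ) (s : Stk Γ D n) : Option (Stk Γ D n) :=
  match op with
  | .pop k => popAt k n s
  | .push k α => pushAt k α d n s

/-- The address (sequence of indices, counted from the bottom of each stack,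
outermost level first) of the topmost `j`-stack of an `n`-stack, if defined. -/
def topAddr : (n : ℕ) → Stk Γ D n → (j : ℕ) → Option (List ℕ)
  | 0, _, j => if j = 0 then some [] else none
  | n+1, s, j =>
    if j = n + 1 then some [] else
    match s.toList.getLast? with
    | none => none
    | some t => (topAddr n t j).map (fun p => (s.toList.length - 1) :: p)

/-- The size (number of `(r-1)`-stacks) of the topmost `r`-stack. -/
def topLen : (n : ℕ) → Stk Γ D n → (r : ℕ) → Option ℕ
  | 0, _, _ => none
  | n+1, s, r =>
    if r = n + 1 then some s.toList.length
    else s.toList.getLast?.bind (fun t => topLen n t r)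

/-- The topmost `j`-stack itself. -/
def topGet : (n : ℕ) → Stk Γ D n → (j : ℕ) → Option (Stk Γ D j)
  | 0, s, j => if h : j = 0 then some (cast (congrArg (Stk Γ D) h.symm) s) else none
  | n+1, s, j =>
    if h : j = n + 1 then some (cast (congrArg (Stk Γ D) h.symm) s)
    else s.toList.getLast?.bind (fun t => topGet n t j)

/-- Validity of an address in a stack. -/
def validAddr : (n : ℕ) → Stk Γ D n → List ℕ → Prop
  | _, _, [] => True
  | 0, _, _ :: _ => False
  | n+1, s, i :: rest => ∃ h : i < s.toList.length, validAddr n (s.toList.get ⟨i, h⟩) rest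

/-- The origin map of one step: given the stack `s` before the operation and the
address of a substack in the stack after the operation, return the address of the
substack it is a (traced) copy of.  A `pop` does not move any surviving substack;
a `push^r` creates, at the top, a copy of the old topmost `(r-1)`-stack, and
substacks of the copy originate from the corresponding substacks of the source. -/
def originOp {n : ℕ} (op : Op Γ) (s : Stk Γ D n) (a : List ℕ) : List ℕ :=
  match op with
  | .pop _ => a
  | .push r _ =>
    match topAddr n s r, topLen n s r with
    | some p, some L =>
      if a.take (n - r) = p ∧ a[(n - r)]? = some L then a.set (n - r) (L - 1) else a
    | _, _ => a

/-- A run of length `len`: a sequence of stacks connected by operations.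
`dat i` is the data value read at step `i` (`none` for no data / ε);
a `pop` may read a data value only if it equals the one stored in the topmost 0-stack. -/
structure Run (Γ D : Type) (n : ℕ) where
  len : ℕ
  stk : ℕ → Stk Γ D n
  op : ℕ → Op Γ
  dat : ℕ → Option D
  ok : ∀ i < len, applyOp (op i) (dat i) n (stk i) = some (stk (i + 1)) ∧
        (∀ k, op i = Op.pop k → dat i = none ∨ ∃ γ, top0 n (stk i) = some (γ, dat i))

variable {n : ℕ}

/-- Trace an address one step backwards (from configuration `i+1` to configuration `i`). -/
def backStep (R : Run Γ D n) (i : ℕ) (a : List ℕ) : List ℕ :=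
  originOp (R.op i) (R.stk i) a

/-- `backB R i j a`: the address in configuration `i` from which the substack at
address `a` in configuration `j` is traced (for `i ≤ j`). -/
def backB (R : Run Γ D n) (i : ℕ) : ℕ → List ℕ → List ℕ
  | j, a => if h : i < j then backB R i (j - 1) (backStep R (j - 1) a) else a
  termination_by j => j
  decreasing_by omega

/-- `R` is `k`-upper: the topmost `k`-stack of the last configuration is a traced
(possibly modified) copy of the topmost `k`-stack of the first configuration. -/
def Upper (R : Run Γ D n) (k : ℕ) : Prop :=
  ∃ a b, topAddr n (R.stk 0) k = some a ∧ topAddr n (R.stk R.len) k = some b ∧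
    backB R 0 R.len b = a ∧ ∀ i ≤ R.len, validAddr n (R.stk i) (backB R i R.len b)

/-- `R` is a `k`-return: the topmost `(k-1)`-stack of the last configuration is a
traced copy of the second topmost `(k-1)`-stack of the first configuration
(in particular the topmost `k`-stack initially has size at least 2), and while
tracing this copy it is never the topmost `(k-1)`-stack of `R i` for `i < R.len`. -/
def IsReturn (R : Run Γ D n) (k : ℕ) : Prop :=
  ∃ p L b, topAddr n (R.stk 0) k = some p ∧ topLen n (R.stk 0) k = some L ∧ 2 ≤ L ∧
    topAddr n (R.stk R.len) (k - 1) = some b ∧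
    backB R 0 R.len b = p.concat (L - 2) ∧
    (∀ i ≤ R.len, validAddr n (R.stk i) (backB R i R.len b)) ∧
    (∀ i < R.len, topAddr n (R.stk i) (k - 1) ≠ some (backB R i R.len b))

/-- `Splits R S T`: the run `R` is the composition `S ∘ T` of the runs `S` and `T`. -/
def Splits (R S T : Run Γ D n) : Prop :=
  R.len = S.len + T.len ∧ S.stk S.len = T.stk 0 ∧
  (∀ i ≤ S.len, R.stk i = S.stk i) ∧
  (∀ i < S.len, R.op i = S.op i ∧ R.dat i = S.dat i) ∧
  (∀ i ≤ T.len, R.stk (S.len + i) = T.stk i) ∧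
  (∀ i < T.len, R.op (S.len + i) = T.op i ∧ R.dat (S.len + i) = T.dat i)

/-- The run `R` with its first step removed (`R[1..|R|]`). -/
def Run.tail (R : Run Γ D n) : Run Γ D n where
  len := R.len - 1
  stk i := R.stk (i + 1)
  op i := R.op (i + 1)
  dat i := R.dat (i + 1)
  ok i hi := R.ok (i + 1) (by omega)

/-- The data value `d` appears somewhere in a stack. -/
inductive Appears (d : D) : (k : ℕ) → Stk Γ D k → Prop where
  | base (γ : Γ) : Appears d 0 (Stk.ofAtom (γ, some d))
  | step {k : ℕ} (t : Stk Γ D k) (l : List (Stk Γ D k)) :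
      t ∈ l → Appears d k t → Appears d (k+1) (Stk.ofList l)


/-! ### Auxiliary development -/

lemma appears_succ_iff {d : D} {n : ℕ} (l : List (Stk Γ D n)) :
    Appears d (n+1) (Stk.ofList l) ↔ ∃ t ∈ l, Appears d n t := by
  constructor
  · intro h
    cases h with
    | step t l' hm ht => exact ⟨t, hm, ht⟩
  · rintro ⟨t, hm, ht⟩
    exact .step t l hm ht

lemma appears_zero_iff {d : D} (x : Γ × Option D) :
    Appears d 0 (Stk.ofAtom x) ↔ x.2 = some d := by
  constructor
  · intro h
    cases h with
    | base γ => rfl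
  · intro h
    obtain ⟨γ, o⟩ := x
    cases h
    exact .base γ

/-- `d` does not appear in the substack of `s` at address `a` (vacuously true
when the address is invalid). -/
def NoD (d : D) : (n : ℕ) → Stk Γ D n → List ℕ → Prop
  | n, s, [] => ¬ Appears d n s
  | 0, _, _ :: _ => True
  | n+1, s, i :: rest =>
      ∀ h : i < s.toList.length, NoD d n (s.toList[i]'h) rest

@[simp] lemma NoD_nil {d : D} {n : ℕ} (s : Stk Γ D n) :
    NoD d n s [] = ¬ Appears d n s := by cases n <;> rfl

@[simp] lemma NoD_cons {d : D} {n : ℕ} (s : Stk Γ D (n+1)) (i : ℕ) (rest : List ℕ) :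
    NoD d (n+1) s (i :: rest) =
      ∀ h : i < s.toList.length, NoD d n (s.toList[i]'h) rest := rfl

lemma nod_spine {d : D} {n : ℕ} {l : List (Stk Γ D n)} {u u' : Stk Γ D n}
    (hl : l.getLast? = some u)
    (hu : ∀ a, NoD d n u a → NoD d n u' a) :
    ∀ a, NoD d (n+1) (Stk.ofList l) a → NoD d (n+1) (Stk.ofList (l.dropLast ++ [u'])) a := by
  have hne : l ≠ [] := by rintro rfl; simp at hl
  have hlen : 1 ≤ l.length := List.length_pos_iff.mpr hne
  have hgl : ∀ h : l.length - 1 < l.length, l[l.length - 1]'h = u := by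
    intro h
    have h1 := List.getLast?_eq_getLast hne
    rw [hl] at h1
    rw [List.getLast_eq_getElem] at h1
    exact (Option.some.inj h1).symm
  intro a
  match a with
  | [] =>
    intro hN hApp
    rw [NoD_nil] at hN
    rw [appears_succ_iff] at hApp
    obtain ⟨v, hv, hvApp⟩ := hApp
    rw [List.mem_append] at hv
    rcases hv with hv | hv
    · exact hN (.step v l (List.dropLast_sublist l |>.subset hv) hvApp)
    · simp only [List.mem_singleton] at hv
      subst hv
      have hnu : ¬ Appears d n u := by
        intro hAu
        exact hN (.step u l (List.mem_of_getLast? hl) hAu)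
      have h2 := hu [] (by rw [NoD_nil]; exact hnu)
      rw [NoD_nil] at h2
      exact h2 hvApp
  | i :: rest =>
    intro hN
    rw [NoD_cons] at hN ⊢
    intro h
    have hlen2 : (Stk.toList (Stk.ofList (l.dropLast ++ [u']))).length = l.length := by
      show (l.dropLast ++ [u']).length = l.length
      rw [List.length_append, List.length_dropLast]
      simp
      omega
    have hil : i < l.length := by omega
    by_cases hi : i < l.length - 1
    · have hg : (Stk.toList (Stk.ofList (l.dropLast ++ [u'])))[i]'h = l[i]'hil := by
        simp only [Stk.toList, Stk.ofList]
        rw [List.getElem_append_left (by rw [List.length_dropLast]; omega)]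
        exact List.getElem_dropLast (by rw [List.length_dropLast]; omega)
      rw [hg]
      exact hN hil
    · have hieq : i = l.length - 1 := by omega
      subst hieq
      have hg : (Stk.toList (Stk.ofList (l.dropLast ++ [u'])))[l.length - 1]'h = u' := by
        simp only [Stk.toList, Stk.ofList]
        exact List.getElem_concat_length (by rw [List.length_dropLast]) _
      rw [hg]
      exact hu rest (hgl hil ▸ hN hil)

lemma nod_setTop0 {d : D} (α : Γ) (dd : Option D) (hdd : dd ≠ some d) :
    ∀ (n : ℕ) (t t' : Stk Γ D n), setTop0 (α, dd) n t = some t' →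
      ∀ a, NoD d n t a → NoD d n t' a := by
  intro n
  induction n with
  | zero =>
    intro t t' ht a _
    simp only [setTop0, Option.some.injEq] at ht
    subst ht
    match a with
    | [] =>
      rw [NoD_nil, appears_zero_iff]
      exact hdd
    | i :: rest => trivial
  | succ n ih =>
    intro t t' ht a hN
    rcases hlast : (Stk.toList t).getLast? with _ | u
    · simp [setTop0, hlast] at ht
    · rcases hset : setTop0 (α, dd) n u with _ | u'
      · simp [setTop0, hlast, hset] at ht
      · have ht' : Stk.ofList ((Stk.toList t).dropLast ++ [u']) = t' := by
          have := ht
          simp [setTop0, hlast, hset] at this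
          exact this
        subst ht'
        exact nod_spine hlast (fun a => ih u u' hset a) a hN

lemma nod_popAt {d : D} :
    ∀ (k n : ℕ) (s s' : Stk Γ D n), popAt k n s = some s' →
      ∀ a, NoD d n s a → NoD d n s' a := by
  intro k n
  induction n with
  | zero => intro s s' hs; simp [popAt] at hs
  | succ n ih =>
    intro s s' hs a hN
    by_cases hk : k = n + 1
    · by_cases hlen : 2 ≤ (Stk.toList s).length
      case neg => simp [popAt, hk, hlen] at hs
      have hs' : Stk.ofList (Stk.toList s).dropLast = s' := by
        have := hs
        simp [popAt, hk, hlen] at this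
        exact this
      subst hs'
      match a with
      | [] =>
        rw [NoD_nil] at hN ⊢
        intro hApp
        rw [appears_succ_iff] at hApp
        obtain ⟨v, hv, hvApp⟩ := hApp
        exact hN (.step v (Stk.toList s) (List.dropLast_sublist _ |>.subset hv) hvApp)
      | i :: rest =>
        rw [NoD_cons] at hN ⊢
        intro h
        have h2 : i < (Stk.toList s).length := by
          have h3 : (Stk.toList (Stk.ofList (Stk.toList s).dropLast)).length
              = (Stk.toList s).length - 1 := List.length_dropLast
          omega
        have hg : (Stk.toList (Stk.ofList (Stk.toList s).dropLast))[i]'h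
            = (Stk.toList s)[i]'h2 := List.getElem_dropLast _
        rw [hg]
        exact hN h2
    · rcases hlast : (Stk.toList s).getLast? with _ | u
      · simp [popAt, hk, hlast] at hs
      · rcases hpop : popAt k n u with _ | u'
        · simp [popAt, hk, hlast, hpop] at hs
        · have hs' : Stk.ofList ((Stk.toList s).dropLast ++ [u']) = s' := by
            have := hs
            simp [popAt, hk, hlast, hpop] at this
            exact this
          subst hs'
          exact nod_spine hlast (fun a => ih u u' hpop a) a hN


lemma topAddr_spec : ∀ (n : ℕ) (S : Stk Γ D n) (j : ℕ) (p : List ℕ),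
    topAddr n S j = some p → j ≤ n ∧ p.length = n - j := by
  intro n
  induction n with
  | zero =>
    intro S j p hp
    by_cases hj : j = 0
    · subst hj
      have hp' : p = [] := by simpa [topAddr] using hp.symm
      subst hp'
      simp
    · simp [topAddr, hj] at hp
  | succ n ih =>
    intro S j p hp
    by_cases hj : j = n + 1
    · subst hj
      have hp' : p = [] := by simpa [topAddr] using hp.symm
      subst hp'
      simp
    · rcases hlast : (Stk.toList S).getLast? with _ | u
      · simp [topAddr, hj, hlast] at hp
      · rcases htop : topAddr n u j with _ | p0
        · simp [topAddr, hj, hlast, htop] at hp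
        · obtain ⟨h1, h2⟩ := ih u j p0 htop
          have hp' : p = ((Stk.toList S).length - 1) :: p0 := by
            simpa [topAddr, hj, hlast, htop] using hp.symm
          subst hp'
          refine ⟨by omega, ?_⟩
          simp [h2]
          omega

lemma pushAt_some_topAddr : ∀ (r : ℕ) (α : Γ) (dd : Option D) (n : ℕ) (s s' : Stk Γ D n),
    pushAt r α dd n s = some s' →
    ∃ p L, topAddr n s r = some p ∧ topLen n s r = some L := by
  intro r α dd n
  induction n with
  | zero => intro s s' hs; simp [pushAt] at hs
  | succ n ih =>
    intro s s' hs
    by_cases hr : r = n + 1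
    · subst hr
      exact ⟨[], (Stk.toList s).length, by simp [topAddr], by simp [topLen]⟩
    · rcases hlast : (Stk.toList s).getLast? with _ | u
      · simp [pushAt, hr, hlast] at hs
      · rcases hpush : pushAt r α dd n u with _ | u'
        · simp [pushAt, hr, hlast, hpush] at hs
        · obtain ⟨p0, L, hp0, hL⟩ := ih u u' hpush
          exact ⟨((Stk.toList s).length - 1) :: p0, L,
            by simp [topAddr, hr, hlast, hp0], by simp [topLen, hr, hlast, hL]⟩

lemma nod_pushAt {d : D} (α : Γ) (dd : Option D) (hdd : dd ≠ some d) :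
    ∀ (r n : ℕ) (s s' : Stk Γ D n) (p : List ℕ) (L : ℕ),
      pushAt r α dd n s = some s' → topAddr n s r = some p → topLen n s r = some L →
      ∀ a : List ℕ,
        NoD d n s (if a.take (n - r) = p ∧ a[(n - r)]? = some L
          then a.set (n - r) (L - 1) else a) →
        NoD d n s' a := by
  intro r n
  induction n with
  | zero => intro s s' p L hs; simp [pushAt] at hs
  | succ n ih =>
    intro s s' p L hs hp hL a hN
    by_cases hr : r = n + 1
    · subst hr
      have hsub : n + 1 - (n + 1) = 0 := Nat.sub_self _
      rw [hsub] at hN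
      have hp' : p = [] := by simpa [topAddr] using hp.symm
      have hL' : L = (Stk.toList s).length := by simpa [topLen] using hL.symm
      subst hp'; subst hL'
      rcases hlast : (Stk.toList s).getLast? with _ | u
      · simp [pushAt, hlast] at hs
      · rcases hset : setTop0 (α, dd) n u with _ | u'
        · simp [pushAt, hlast, hset] at hs
        · have hs' : Stk.ofList ((Stk.toList s) ++ [u']) = s' := by
            have := hs
            simp [pushAt, hlast, hset] at this
            exact this
          subst hs'
          have hne : (Stk.toList s) ≠ [] := by
            intro hcon; rw [hcon] at hlast; simp at hlast
          have hlen1 : 1 ≤ (Stk.toList s).length := List.length_pos_iff.mpr hne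
          have hgl : ∀ h : (Stk.toList s).length - 1 < (Stk.toList s).length,
              (Stk.toList s)[(Stk.toList s).length - 1]'h = u := by
            intro h
            have h1 := List.getLast?_eq_getLast hne
            rw [hlast] at h1
            rw [List.getLast_eq_getElem] at h1
            exact (Option.some.inj h1).symm
          match a with
          | [] =>
            rw [if_neg (by simp)] at hN
            rw [NoD_nil] at hN ⊢
            intro hApp
            rw [appears_succ_iff] at hApp
            obtain ⟨v, hv, hvApp⟩ := hApp
            rw [List.mem_append] at hv
            rcases hv with hv | hv
            · exact hN (.step v _ hv hvApp)
            · simp only [List.mem_singleton] at hv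
              have hnu : ¬ Appears d n u := fun hAu =>
                hN (.step u _ (List.mem_of_getLast? hlast) hAu)
              have h2 := nod_setTop0 α dd hdd n u u' hset [] (by rw [NoD_nil]; exact hnu)
              rw [NoD_nil] at h2
              exact h2 (hv ▸ hvApp)
          | i :: rest =>
            rw [NoD_cons]
            intro h
            have hlen2 : (Stk.toList (Stk.ofList ((Stk.toList s) ++ [u']))).length
                = (Stk.toList s).length + 1 := by
              show ((Stk.toList s) ++ [u']).length = _
              simp
            have hih : i < (Stk.toList s).length + 1 := by rw [← hlen2]; exact h
            by_cases hiL : i = (Stk.toList s).length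
            · subst hiL
              have hg : (Stk.toList (Stk.ofList ((Stk.toList s) ++ [u'])))[(Stk.toList s).length]'h
                  = u' := by
                show ((Stk.toList s) ++ [u'])[(Stk.toList s).length]'h = u'
                exact List.getElem_concat_length rfl _
              rw [hg]
              apply nod_setTop0 α dd hdd n u u' hset rest
              rw [if_pos ⟨by simp, by simp⟩] at hN
              rw [show ((Stk.toList s).length :: rest).set 0 ((Stk.toList s).length - 1)
                  = ((Stk.toList s).length - 1) :: rest from rfl] at hN
              rw [NoD_cons] at hN
              have h3 := hN (by omega)
              rwa [hgl (by omega)] at h3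
            · have hil : i < (Stk.toList s).length := by omega
              rw [if_neg (by simp [hiL])] at hN
              have hg : (Stk.toList (Stk.ofList ((Stk.toList s) ++ [u'])))[i]'h
                  = (Stk.toList s)[i]'hil := by
                show ((Stk.toList s) ++ [u'])[i]'h = (Stk.toList s)[i]'hil
                exact List.getElem_append_left hil
              rw [hg]
              rw [NoD_cons] at hN
              exact hN hil
    · rcases hlast : (Stk.toList s).getLast? with _ | u
      · simp [pushAt, hr, hlast] at hs
      · rcases htop : topAddr n u r with _ | p0
        · simp [topAddr, hr, hlast, htop] at hp
        · have hp' : p = ((Stk.toList s).length - 1) :: p0 := by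
            simpa [topAddr, hr, hlast, htop] using hp.symm
          subst hp'
          have hLu : topLen n u r = some L := by
            have := hp
            simpa [topLen, hr, hlast] using hL
          rcases hpush : pushAt r α dd n u with _ | u'
          · simp [pushAt, hr, hlast, hpush] at hs
          · have hs' : Stk.ofList ((Stk.toList s).dropLast ++ [u']) = s' := by
              have := hs
              simp [pushAt, hr, hlast, hpush] at this
              exact this
            subst hs'
            have hrn : r ≤ n := (topAddr_spec n u r p0 htop).1
            have hm : n + 1 - r = (n - r) + 1 := by omega
            rw [hm] at hN
            have hne : (Stk.toList s) ≠ [] := by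
              intro hcon; rw [hcon] at hlast; simp at hlast
            have hlen1 : 1 ≤ (Stk.toList s).length := List.length_pos_iff.mpr hne
            have hgl : ∀ h : (Stk.toList s).length - 1 < (Stk.toList s).length,
                (Stk.toList s)[(Stk.toList s).length - 1]'h = u := by
              intro h
              have h1 := List.getLast?_eq_getLast hne
              rw [hlast] at h1
              rw [List.getLast_eq_getElem] at h1
              exact (Option.some.inj h1).symm
            match a with
            | [] =>
              rw [if_neg (by simp)] at hN
              rw [NoD_nil] at hN ⊢
              intro hApp
              rw [appears_succ_iff] at hApp
              obtain ⟨v, hv, hvApp⟩ := hApp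
              rw [List.mem_append] at hv
              rcases hv with hv | hv
              · exact hN (.step v _ (List.dropLast_sublist _ |>.subset hv) hvApp)
              · simp only [List.mem_singleton] at hv
                have hnu : ¬ Appears d n u := fun hAu =>
                  hN (.step u _ (List.mem_of_getLast? hlast) hAu)
                have h2 := ih u u' p0 L hpush htop hLu []
                  (by rw [if_neg (by simp), NoD_nil]; exact hnu)
                rw [NoD_nil] at h2
                exact h2 (hv ▸ hvApp)
            | i :: rest =>
              rw [NoD_cons]
              intro h
              have hlen2 : (Stk.toList (Stk.ofList ((Stk.toList s).dropLast ++ [u']))).length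
                  = (Stk.toList s).length := by
                show ((Stk.toList s).dropLast ++ [u']).length = _
                rw [List.length_append, List.length_dropLast]
                simp
                omega
              have hih : i < (Stk.toList s).length := by rw [← hlen2]; exact h
              by_cases hiL : i = (Stk.toList s).length - 1
              · subst hiL
                have hg : (Stk.toList (Stk.ofList ((Stk.toList s).dropLast
                    ++ [u'])))[(Stk.toList s).length - 1]'h = u' := by
                  show ((Stk.toList s).dropLast ++ [u'])[(Stk.toList s).length - 1]'h = u'
                  exact List.getElem_concat_length (by rw [List.length_dropLast]) _
                rw [hg]
                apply ih u u' p0 L hpush htop hLu rest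
                by_cases hc : rest.take (n - r) = p0 ∧ rest[n - r]? = some L
                · rw [if_pos hc]
                  rw [if_pos ⟨by rw [List.take_succ_cons, hc.1],
                    by rw [List.getElem?_cons_succ]; exact hc.2⟩] at hN
                  rw [show (((Stk.toList s).length - 1) :: rest).set ((n - r) + 1) (L - 1)
                      = ((Stk.toList s).length - 1) :: rest.set (n - r) (L - 1) from rfl] at hN
                  rw [NoD_cons] at hN
                  have h3 := hN (by omega)
                  rwa [hgl (by omega)] at h3
                · rw [if_neg hc]
                  rw [if_neg (by
                    rintro ⟨h1, h2⟩
                    rw [List.take_succ_cons, List.cons.injEq] at h1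
                    rw [List.getElem?_cons_succ] at h2
                    exact hc ⟨h1.2, h2⟩)] at hN
                  rw [NoD_cons] at hN
                  have h3 := hN (by omega)
                  rwa [hgl (by omega)] at h3
              · have hil : i < (Stk.toList s).length - 1 := by omega
                rw [if_neg (by
                  rintro ⟨h1, h2⟩
                  rw [List.take_succ_cons, List.cons.injEq] at h1
                  exact hiL h1.1)] at hN
                have hil' : i < (Stk.toList s).length := by omega
                have hg : (Stk.toList (Stk.ofList ((Stk.toList s).dropLast ++ [u'])))[i]'h
                    = (Stk.toList s)[i]'hil' := by
                  show ((Stk.toList s).dropLast ++ [u'])[i]'h = (Stk.toList s)[i]'hil'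
                  refine (List.getElem_append_left (by rw [List.length_dropLast]; exact hil)).trans ?_
                  exact List.getElem_dropLast (by rw [List.length_dropLast]; exact hil)
                rw [hg]
                rw [NoD_cons] at hN
                exact hN hil'

lemma backB_self (R : Run Γ D n) (i : ℕ) (a : List ℕ) : backB R i i a = a := by
  rw [backB, dif_neg (lt_irrefl i)]

lemma backB_cons (R : Run Γ D n) {i j : ℕ} (h : i < j) :
    ∀ a, backB R i j a = backStep R i (backB R (i+1) j a) := by
  induction j, h using Nat.le_induction with
  | base =>
    intro a
    rw [backB, dif_pos (Nat.lt_succ_self i)]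
    simp only [Nat.succ_sub_one, Nat.add_sub_cancel]
    rw [backB_self, backB_self]
  | succ j hj ihj =>
    intro a
    rw [backB, dif_pos (by omega : i < j + 1)]
    simp only [Nat.succ_sub_one, Nat.add_sub_cancel]
    rw [ihj (backStep R j a)]
    congr 1
    conv_rhs => rw [backB]
    rw [dif_pos (by omega : i + 1 < j + 1)]
    simp only [Nat.succ_sub_one, Nat.add_sub_cancel]

lemma nod_topAddr {d : D} : ∀ (n : ℕ) (S : Stk Γ D n) (j : ℕ) (p : List ℕ) (X : Stk Γ D j),
    topAddr n S j = some p → topGet n S j = some X →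
    (NoD d n S p ↔ ¬ Appears d j X) := by
  intro n
  induction n with
  | zero =>
    intro S j p X hp hX
    by_cases hj : j = 0
    · subst hj
      have hp' : p = [] := by simpa [topAddr] using hp.symm
      subst hp'
      have hX' : X = S := by simpa [topGet] using hX.symm
      subst hX'
      simp
    · simp [topAddr, hj] at hp
  | succ n ih =>
    intro S j p X hp hX
    by_cases hj : j = n + 1
    · subst hj
      have hp' : p = [] := by simpa [topAddr] using hp.symm
      subst hp'
      have hX' : X = S := by simpa [topGet] using hX.symm
      subst hX'
      simp
    · rcases hlast : (Stk.toList S).getLast? with _ | u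
      · simp [topAddr, hj, hlast] at hp
      · rcases htop : topAddr n u j with _ | p0
        · simp [topAddr, hj, hlast, htop] at hp
        · have hp' : p = ((Stk.toList S).length - 1) :: p0 := by
            simpa [topAddr, hj, hlast, htop] using hp.symm
          subst hp'
          have hX' : topGet n u j = some X := by simpa [topGet, hj, hlast] using hX
          have hne : (Stk.toList S) ≠ [] := by
            intro hcon; rw [hcon] at hlast; simp at hlast
          have hlen1 : 1 ≤ (Stk.toList S).length := List.length_pos_iff.mpr hne
          have hgl : ∀ h : (Stk.toList S).length - 1 < (Stk.toList S).length,
              (Stk.toList S)[(Stk.toList S).length - 1]'h = u := by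
            intro h
            have h1 := List.getLast?_eq_getLast hne
            rw [hlast] at h1
            rw [List.getLast_eq_getElem] at h1
            exact (Option.some.inj h1).symm
          rw [NoD_cons]
          constructor
          · intro hN
            have h3 := hN (by omega)
            rw [hgl (by omega)] at h3
            exact (ih u j p0 X htop hX').mp h3
          · intro hA h
            rw [hgl h]
            exact (ih u j p0 X htop hX').mpr hA


/-- a normalized `k`-upper run cannot introduce excluded data values
into the topmost `k`-stack.  `d0` is the distinguished data value `0`; `R` is
normalized when every data-reading (non-ε) `push` of `R` reads `d0`; if
`d ≠ d0` is not read by `R` and does not appear in the topmost `k`-stack of the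
initial configuration, then it does not appear in the topmost `k`-stack of the
final configuration. -/
theorem normalized_upper_no_new_data {Γ D : Type} {n : ℕ} (k : ℕ) (hkn : k ≤ n)
    (R : Run Γ D n) (d0 d : D) (hd : d ≠ d0)
    (hupper : Upper R k)
    (hnorm : ∀ i < R.len, (∃ r α, R.op i = Op.push r α) →
      (R.dat i = none ∨ R.dat i = some d0))
    (hnread : ∀ i < R.len, R.dat i ≠ some d)
    (s t : Stk Γ D k)
    (hs : topGet n (R.stk 0) k = some s) (ht : topGet n (R.stk R.len) k = some t)
    (hnot : ¬ Appears d k s) : ¬ Appears d k t := by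
  obtain ⟨a, b, h0, hb, hback, -⟩ := hupper
  have key : ∀ i, i ≤ R.len → NoD d n (R.stk i) (backB R i R.len b) := by
    intro i
    induction i with
    | zero =>
      intro _
      rw [hback]
      exact (nod_topAddr n (R.stk 0) k a s h0 hs).mpr hnot
    | succ i ihi =>
      intro hle
      have hi : i < R.len := by omega
      have hstep := ihi (by omega)
      rw [backB_cons R hi] at hstep
      have hok := (R.ok i hi).1
      cases hop : R.op i with
      | pop k' =>
        rw [hop] at hok
        simp only [applyOp] at hok
        have hbs : backStep R i (backB R (i+1) R.len b) = backB R (i+1) R.len b := by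
          simp [backStep, hop, originOp]
        rw [hbs] at hstep
        exact nod_popAt k' n (R.stk i) (R.stk (i+1)) hok _ hstep
      | push r β =>
        rw [hop] at hok
        simp only [applyOp] at hok
        obtain ⟨p, L, hp, hL⟩ := pushAt_some_topAddr r β (R.dat i) n _ _ hok
        have hbs : backStep R i (backB R (i+1) R.len b) =
            if (backB R (i+1) R.len b).take (n - r) = p ∧
                (backB R (i+1) R.len b)[(n - r)]? = some L
            then (backB R (i+1) R.len b).set (n - r) (L - 1)
            else backB R (i+1) R.len b := by
          simp [backStep, hop, originOp, hp, hL]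
        rw [hbs] at hstep
        exact nod_pushAt β (R.dat i) (hnread i hi) r n _ _ p L hok hp hL _ hstep
  have hfin := key R.len le_rfl
  rw [backB_self] at hfin
  exact (nod_topAddr n (R.stk R.len) k b t hb ht).mp hfin

end HOPDA
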